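/- A bounded subset A of a real Banach space X is weakly relatively compact if and only if for every sequence (x_n) in A, the intersection over k of the norm-closed convex hulls of {x_n : n ≥ k} is nonempty. -/

import Mathlib

noncomputable section
open Filter Topology Set NormedSpace Pointwise

variable {X : Type*} [NormedAddCommGroup X] [NormedSpace ℝ X] [CompleteSpace X]

/-- `B` is a boundary for `X`: a subset of the dual unit sphere on which every
element of `X` attains its norm. -/
def IsBoundary (B : Set (StrongDual ℝ X)) : Prop :=
  (∀ f ∈ B, ‖f‖ = 1) ∧ ∀ x : X, ∃ f ∈ B, f x = ‖x‖

/-- The closure of `S` in the topology `σ_B` of pointwise convergence on `B`. -/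
def sigmaClosure (B : Set (StrongDual ℝ X)) (S : Set X) : Set X :=
  {x | ∀ ε > (0 : ℝ), ∀ F : Finset (StrongDual ℝ X), (F : Set (StrongDual ℝ X)) ⊆ B →
    ∃ y ∈ S, ∀ f ∈ F, |f x - f y| < ε}

set_option linter.unusedSectionVars false
set_option maxHeartbeats 2000000
open scoped Classical

variable (X) in
/-- The canonical map from `X` with its weak topology into the double dual with
its weak-star topology. -/
def wrcJw : WeakSpace ℝ X → WeakDual ℝ (StrongDual ℝ X) := fun x => inclusionInDoubleDual ℝ X x

lemma wrc_isInducing : IsInducing (wrcJw X) := by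
  refine IsInducing.of_comp ?_ (WeakDual.coeFn_continuous) ⟨rfl⟩
  exact WeakBilin.continuous_of_continuous_eval _ fun y =>
    WeakBilin.eval_continuous ((topDualPairing ℝ X).flip) y

instance wrcSubAddCommGroup (V : Submodule ℝ (StrongDual ℝ (StrongDual ℝ X))) : AddCommGroup V :=
  Submodule.addCommGroup (R := ℝ) (M := StrongDual ℝ (StrongDual ℝ X)) V

instance wrcSubNormed (V : Submodule ℝ (StrongDual ℝ (StrongDual ℝ X))) : NormedAddCommGroup V :=
  Submodule.normedAddCommGroup (𝕜 := ℝ) (E := StrongDual ℝ (StrongDual ℝ X)) V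

instance wrcSubNormedSpace (V : Submodule ℝ (StrongDual ℝ (StrongDual ℝ X))) : NormedSpace ℝ V :=
  Submodule.normedSpace (𝕜 := ℝ) (R := ℝ) (E := StrongDual ℝ (StrongDual ℝ X)) V

lemma wrc_exists_norming (V : Submodule ℝ (StrongDual ℝ (StrongDual ℝ X))) [FiniteDimensional ℝ V] :
    ∃ F : Finset (StrongDual ℝ X), (∀ f ∈ F, ‖f‖ ≤ 1) ∧
      ∀ v ∈ V, ∃ f ∈ F, ‖v‖ ≤ 2 * ‖v f‖ := by
  haveI : ProperSpace V := FiniteDimensional.proper ℝ V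
  have hsel : ∀ v : V, ∃ f : StrongDual ℝ X, ‖f‖ ≤ 1 ∧
      (‖v‖ = 1 → (3/4 : ℝ) < ‖(v : StrongDual ℝ (StrongDual ℝ X)) f‖) := by
    intro v
    by_cases hv : ‖v‖ = 1
    · have h34 : (3/4 : ℝ) < ‖(v : StrongDual ℝ (StrongDual ℝ X))‖ := by
        rw [show ‖(v : StrongDual ℝ (StrongDual ℝ X))‖ = ‖v‖ from rfl, hv]; norm_num
      obtain ⟨f, hf1, hf2⟩ := ContinuousLinearMap.exists_lt_apply_of_lt_opNorm _ h34
      exact ⟨f, hf1.le, fun _ => hf2⟩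
    · exact ⟨0, by simp, fun h => absurd h hv⟩
  choose φ hφ1 hφ2 using hsel
  have hK : IsCompact (Metric.sphere (0 : V) 1) := isCompact_sphere 0 1
  obtain ⟨t, -, ht⟩ := hK.elim_nhds_subcover
      (fun v => {w : V | (3/4 : ℝ) < ‖(w : StrongDual ℝ (StrongDual ℝ X)) (φ v)‖}) (by
    intro v hv
    have hc : Continuous fun w : V => ‖(w : StrongDual ℝ (StrongDual ℝ X)) (φ v)‖ := by fun_prop
    exact (isOpen_lt continuous_const hc).mem_nhds (hφ2 v (by simpa using hv)))
  refine ⟨insert 0 (t.image φ), ?_, ?_⟩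
  · intro f hf
    rcases Finset.mem_insert.mp hf with h | h
    · simp [h]
    · obtain ⟨v, -, rfl⟩ := Finset.mem_image.mp h
      exact hφ1 v
  · intro v hv
    rcases eq_or_ne v 0 with rfl | hne
    · exact ⟨0, Finset.mem_insert_self _ _, by simp; exact (norm_zero (E := StrongDual ℝ (StrongDual ℝ X))).le⟩
    · have hvpos : (0:ℝ) < ‖v‖ := by
        rcases not_forall.mp
          (fun h => hne (ContinuousLinearMap.ext fun g => by simpa using h g)) with ⟨g, hg⟩
        by_contra hle
        push_neg at hle
        have h0 : ‖v‖ = 0 := le_antisymm hle (norm_nonneg v)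
        have h1 := v.le_opNorm g
        rw [h0, zero_mul] at h1
        exact hg (by simpa [norm_le_zero_iff] using h1)
      set u : V := ⟨v, hv⟩ with hu
      have hw : (‖v‖⁻¹ • u) ∈ Metric.sphere (0:V) 1 := by
        rw [mem_sphere_zero_iff_norm]
        rw [norm_smul (‖v‖⁻¹) u, show ‖u‖ = ‖v‖ from rfl, Real.norm_eq_abs,
          abs_of_pos (inv_pos.mpr hvpos), inv_mul_cancel₀ hvpos.ne']
      obtain ⟨s, hs, hws⟩ := Set.mem_iUnion₂.mp (ht hw)
      refine ⟨φ s, Finset.mem_insert_of_mem (Finset.mem_image_of_mem _ hs), ?_⟩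
      have h3 : (3/4:ℝ) < ‖‖v‖⁻¹ * v (φ s)‖ :=
        hws
      rw [Real.norm_eq_abs, abs_mul, abs_of_pos (inv_pos.mpr hvpos), inv_mul_eq_div] at h3
      have h4 : (3/4:ℝ) * ‖v‖ < |v (φ s)| := (lt_div_iff₀ hvpos).mp h3
      rw [Real.norm_eq_abs]
      linarith

lemma wrc_approx_of_mem_closure {S : Set (WeakDual ℝ (StrongDual ℝ X))} {z : WeakDual ℝ (StrongDual ℝ X)}
    (hz : z ∈ closure S) (F : Finset (StrongDual ℝ X)) {ε : ℝ} (hε : 0 < ε) :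
    ∃ w ∈ S, ∀ f ∈ F, |z f - w f| < ε := by
  have hopen : IsOpen {w : WeakDual ℝ (StrongDual ℝ X) | ∀ f ∈ F, |z f - w f| < ε} := by
    have heq : {w : WeakDual ℝ (StrongDual ℝ X) | ∀ f ∈ F, |z f - w f| < ε} =
        ⋂ f ∈ F, {w : WeakDual ℝ (StrongDual ℝ X) | |z f - w f| < ε} := by
      ext w; simp
    rw [heq]
    refine isOpen_biInter_finset fun f _ => ?_
    exact isOpen_lt ((continuous_const.sub (WeakDual.eval_continuous f)).abs) continuous_const
  have hmem : z ∈ {w : WeakDual ℝ (StrongDual ℝ X) | ∀ f ∈ F, |z f - w f| < ε} := by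
    intro f _; simpa using hε
  obtain ⟨w, hw1, hw2⟩ := _root_.mem_closure_iff.mp hz _ hopen hmem
  exact ⟨w, hw2, hw1⟩

/-- Recursively build a sequence where each term may depend on all previous terms. -/
def wrcBuildSeq {α : Type*} (pick : ∀ n, (Fin n → α) → α) : ℕ → α
  | n => pick n (fun i => wrcBuildSeq pick i)
decreasing_by exact i.isLt

lemma wrcBuildSeq_eq {α : Type*} (pick : ∀ n, (Fin n → α) → α) (n : ℕ) :
    wrcBuildSeq pick n = pick n (fun i => wrcBuildSeq pick i) := by
  rw [wrcBuildSeq]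

def wrcVspan (z : StrongDual ℝ (StrongDual ℝ X)) (n : ℕ) (u : ℕ → X) : Submodule ℝ (StrongDual ℝ (StrongDual ℝ X)) :=
  Submodule.span ℝ (insert z ((inclusionInDoubleDual ℝ X) '' (u '' Iio n)))

lemma wrcVspan_fd (z : StrongDual ℝ (StrongDual ℝ X)) (n : ℕ) (u : ℕ → X) :
    FiniteDimensional ℝ (wrcVspan z n u) :=
  FiniteDimensional.span_of_finite ℝ ((((Set.finite_Iio n).image u).image _).insert z)

def wrcNormF (V : Submodule ℝ (StrongDual ℝ (StrongDual ℝ X))) : Finset (StrongDual ℝ X) :=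
  if h : FiniteDimensional ℝ V then (@wrc_exists_norming X _ _ _ V h).choose else ∅

lemma wrcNormF_spec (V : Submodule ℝ (StrongDual ℝ (StrongDual ℝ X))) (h : FiniteDimensional ℝ V) :
    (∀ f ∈ wrcNormF V, ‖f‖ ≤ 1) ∧ ∀ v ∈ V, ∃ f ∈ wrcNormF V, ‖v‖ ≤ 2 * ‖v f‖ := by
  rw [wrcNormF, dif_pos h]
  exact (@wrc_exists_norming X _ _ _ V h).choose_spec

def wrcFset (z : StrongDual ℝ (StrongDual ℝ X)) (n : ℕ) (u : ℕ → X) : Finset (StrongDual ℝ X) :=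
  wrcNormF (wrcVspan z n u)

lemma wrcFset_congr (z : StrongDual ℝ (StrongDual ℝ X)) {n : ℕ} {u u' : ℕ → X}
    (h : ∀ j < n, u j = u' j) : wrcFset z n u = wrcFset z n u' := by
  unfold wrcFset wrcVspan
  rw [Set.image_congr (fun a ha => h a (Set.mem_Iio.mp ha))]

lemma wrc_key (A : Set X)
    (hch : ∀ x : ℕ → X, (∀ n, x n ∈ A) →
      (⋂ k : ℕ, closure (convexHull ℝ {y : X | ∃ n ≥ k, y = x n})).Nonempty)
    {z : WeakDual ℝ (StrongDual ℝ X)} (hz : z ∈ closure (wrcJw X '' A)) :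
    ∃ ξ : X, z = wrcJw X ξ := by
  have hz'f : ∀ f : StrongDual ℝ X, (WeakDual.toStrongDual z) f = z f := fun _ => rfl
  set z' : StrongDual ℝ (StrongDual ℝ X) := WeakDual.toStrongDual z with hz'def
  -- the inductive choice
  have hpick : ∀ n (prev : Fin n → X), ∃ a, a ∈ A ∧
      ∀ f ∈ (Finset.range (n+1)).biUnion
        (fun i => wrcFset z' i (fun j => if h : j < n then prev ⟨j, h⟩ else 0)),
        |z' f - f a| < 1/(n+1) := by
    intro n prev
    have hε : (0:ℝ) < 1/(n+1) := by positivity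
    obtain ⟨w, hw, hww⟩ := wrc_approx_of_mem_closure hz
      ((Finset.range (n+1)).biUnion
        (fun i => wrcFset z' i (fun j => if h : j < n then prev ⟨j, h⟩ else 0))) hε
    obtain ⟨a, ha, rfl⟩ := hw
    exact ⟨a, ha, fun f hf => hww f hf⟩
  choose pick hpickA hpickF using hpick
  set x : ℕ → X := wrcBuildSeq pick with hxdef
  have hxeq : ∀ n, x n = pick n (fun i => x i) := fun n => wrcBuildSeq_eq pick n
  have hxA : ∀ n, x n ∈ A := by
    intro n; rw [hxeq n]; exact hpickA n _
  have hxapprox : ∀ n, ∀ i ≤ n, ∀ f ∈ wrcFset z' i x, |z' f - f (x n)| < 1/(n+1) := by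
    intro n i hi f hf
    have h1 := hpickF n (fun i : Fin n => x i)
    have hcong : wrcFset z' i (fun j => if h : j < n then x j else 0) = wrcFset z' i x := by
      refine wrcFset_congr z' (fun j hj => ?_)
      simp [show j < n from lt_of_lt_of_le hj hi]
    have hmem : f ∈ (Finset.range (n+1)).biUnion
        (fun i => wrcFset z' i (fun j => if h : j < n then x j else 0)) := by
      refine Finset.mem_biUnion.mpr ⟨i, Finset.mem_range.mpr (Nat.lt_succ_of_le hi), ?_⟩
      rw [hcong]; exact hf
    have h2 := h1 f hmem
    rw [← hxeq n] at h2
    exact h2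
  -- the limit point
  obtain ⟨ξ, hξ⟩ := hch x hxA
  rw [Set.mem_iInter] at hξ
  refine ⟨ξ, ?_⟩
  -- Claim A : chosen functionals agree on z' and ξ
  have claimA : ∀ i, ∀ f ∈ wrcFset z' i x, z' f = f ξ := by
    intro i f hf
    have hbound : ∀ N, i ≤ N → |z' f - f ξ| ≤ 1/(N+1) := by
      intro N hN
      have hC : ξ ∈ (fun y : X => f y) ⁻¹' Metric.closedBall (z' f) (1/(N+1)) := by
        refine closure_minimal (convexHull_min ?_ ?_) ?_ (hξ N)
        · rintro y ⟨n, hn, rfl⟩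
          have h1 : |z' f - f (x n)| < 1/(n+1) := hxapprox n i (le_trans hN hn) f hf
          have h2 : (1:ℝ)/(n+1) ≤ 1/(N+1) := by
            apply one_div_le_one_div_of_le (by positivity)
            have : (N:ℝ) ≤ n := Nat.cast_le.mpr hn
            linarith
          simp only [Set.mem_preimage, Metric.mem_closedBall, Real.dist_eq]
          rw [abs_sub_comm]
          linarith
        · exact (convex_closedBall _ _).linear_preimage (f : X →ₗ[ℝ] ℝ)
        · exact Metric.isClosed_closedBall.preimage f.continuous
      simp only [Set.mem_preimage, Metric.mem_closedBall, Real.dist_eq] at hC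
      rw [abs_sub_comm] at hC
      exact hC
    by_contra hne
    have hpos : 0 < |z' f - f ξ| := abs_pos.mpr (sub_ne_zero.mpr hne)
    obtain ⟨N, hN⟩ := exists_nat_one_div_lt hpos
    have h1 := hbound (max N i) (le_max_right _ _)
    have h2 : (1:ℝ)/((max N i : ℕ) + 1) ≤ 1/(N+1) := by
      apply one_div_le_one_div_of_le (by positivity)
      have : (N:ℝ) ≤ (max N i : ℕ) := Nat.cast_le.mpr (le_max_left _ _)
      linarith
    linarith
  -- Claim B : z' = J ξ
  have claimB : z' = inclusionInDoubleDual ℝ X ξ := by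
    rw [← sub_eq_zero]; refine (norm_eq_zero (E := StrongDual ℝ (StrongDual ℝ X))).mp ?_
    have hle : ∀ ε > (0:ℝ), ‖z' - inclusionInDoubleDual ℝ X ξ‖ ≤ 3 * ε := by
      intro ε hε
      have hξ0 := hξ 0
      obtain ⟨w, hw, hdist⟩ := Metric.mem_closure_iff.mp hξ0 ε hε
      -- w lies in the span of finitely many x n
      obtain ⟨m, hwspan⟩ : ∃ m, w ∈ Submodule.span ℝ (x '' Iio m) := by
        rw [convexHull_eq_union_convexHull_finite_subsets] at hw
        obtain ⟨t, ht, hwt⟩ := Set.mem_iUnion₂.mp hw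
        have hsel : ∀ y ∈ t, ∃ n : ℕ, y = x n := by
          intro y hy
          obtain ⟨n, -, rfl⟩ := ht hy
          exact ⟨n, rfl⟩
        choose g hg using hsel
        refine ⟨(t.attach.sup (fun y => g y.1 y.2)) + 1, ?_⟩
        have htsub : (t : Set X) ⊆ x '' Iio ((t.attach.sup (fun y => g y.1 y.2)) + 1) := by
          intro y hy
          refine ⟨g y hy, ?_, (hg y hy).symm⟩
          exact Set.mem_Iio.mpr (Nat.lt_succ_of_le
            (Finset.le_sup (f := fun y : {a // a ∈ t} => g y.1 y.2) (Finset.mem_attach t ⟨y, hy⟩)))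
        have hw2 : w ∈ convexHull ℝ (x '' Iio ((t.attach.sup (fun y => g y.1 y.2)) + 1)) :=
          convexHull_mono htsub hwt
        exact convexHull_min Submodule.subset_span (Submodule.span ℝ _).convex hw2
      -- z' - J w belongs to the norming span
      have hv : z' - inclusionInDoubleDual ℝ X w ∈ wrcVspan z' m x := by
        refine Submodule.sub_mem (R := ℝ) (M := StrongDual ℝ (StrongDual ℝ X)) _ (Submodule.subset_span (Set.mem_insert _ _)) ?_
        have h1 : inclusionInDoubleDual ℝ X w ∈
            Submodule.span ℝ ((inclusionInDoubleDual ℝ X) '' (x '' Iio m)) := by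
          have h2 := Submodule.apply_mem_span_image_of_mem_span
            ((inclusionInDoubleDual ℝ X) : X →ₗ[ℝ] StrongDual ℝ (StrongDual ℝ X)) hwspan
          exact h2
        refine Submodule.span_mono (Set.subset_insert _ _) h1
      obtain ⟨f, hf, hfle⟩ := (wrcNormF_spec (wrcVspan z' m x) (wrcVspan_fd z' m x)).2 _ hv
      have hf1 : ‖f‖ ≤ 1 := (wrcNormF_spec (wrcVspan z' m x) (wrcVspan_fd z' m x)).1 f hf
      have hzf : z' f = f ξ := claimA m f hf
      have heval : (z' - inclusionInDoubleDual ℝ X w) f = f ξ - f w := by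
        simp [hzf]
      have hsmall : ‖(z' - inclusionInDoubleDual ℝ X w) f‖ ≤ ε := by
        rw [heval, show f ξ - f w = f (ξ - w) by simp]
        calc ‖f (ξ - w)‖ ≤ ‖f‖ * ‖ξ - w‖ := f.le_opNorm _
          _ ≤ 1 * ‖ξ - w‖ := by
              apply mul_le_mul_of_nonneg_right hf1 (norm_nonneg _)
          _ ≤ ε := by
              rw [one_mul]
              have : dist ξ w = ‖ξ - w‖ := dist_eq_norm ξ w
              linarith
      have h2 : ‖z' - inclusionInDoubleDual ℝ X w‖ ≤ 2 * ε := by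
        calc ‖z' - inclusionInDoubleDual ℝ X w‖ ≤ 2 * ‖(z' - inclusionInDoubleDual ℝ X w) f‖ :=
              hfle
          _ ≤ 2 * ε := by linarith
      calc ‖z' - inclusionInDoubleDual ℝ X ξ‖
          ≤ ‖z' - inclusionInDoubleDual ℝ X w‖ + ‖inclusionInDoubleDual ℝ X w -
              inclusionInDoubleDual ℝ X ξ‖ :=
            norm_sub_le_norm_sub_add_norm_sub z' (inclusionInDoubleDual ℝ X w)
              (inclusionInDoubleDual ℝ X ξ)
        _ ≤ 2 * ε + ‖w - ξ‖ := by
            have h3 : ‖inclusionInDoubleDual ℝ X w - inclusionInDoubleDual ℝ X ξ‖ ≤ ‖w - ξ‖ := by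
              rw [← map_sub]
              exact double_dual_bound ℝ X _
            linarith
        _ ≤ 3 * ε := by
            have h4 : ‖w - ξ‖ = dist ξ w := by rw [dist_eq_norm, norm_sub_rev]
            linarith
    have h0 : ‖z' - inclusionInDoubleDual ℝ X ξ‖ ≤ 0 := by
      refine le_of_forall_pos_le_add ?_
      intro ε hε
      calc ‖z' - inclusionInDoubleDual ℝ X ξ‖ ≤ 3 * (ε/3) := hle (ε/3) (by positivity)
        _ = ε := by ring
        _ ≤ 0 + ε := by linarith
    exact le_antisymm h0 (norm_nonneg (E := StrongDual ℝ (StrongDual ℝ X)) _)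
  exact WeakDual.toStrongDual.injective claimB

theorem wrc_iff_chains (A : Set X) (hA : Bornology.IsBounded A) :
    IsCompact (closure ((toWeakSpace ℝ X) '' A)) ↔
      ∀ x : ℕ → X, (∀ n, x n ∈ A) →
        (⋂ k : ℕ, closure (convexHull ℝ {y : X | ∃ n ≥ k, y = x n})).Nonempty := by
  constructor
  · -- compactness implies nonempty chains of closed convex hulls
    intro hcpt x hx
    set xw : ℕ → WeakSpace ℝ X := fun n => toWeakSpace ℝ X (x n) with hxw
    have hle : Filter.map xw atTop ≤ 𝓟 (closure ((toWeakSpace ℝ X) '' A)) := by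
      refine le_principal_iff.mpr (mem_map.mpr ?_)
      filter_upwards with n
      exact subset_closure ⟨x n, hx n, rfl⟩
    obtain ⟨ζ, -, hζ⟩ := hcpt.exists_clusterPt hle
    refine ⟨(toWeakSpace ℝ X).symm ζ, Set.mem_iInter.mpr fun k => ?_⟩
    have h1 : ζ ∈ closure (toWeakSpace ℝ X '' {y : X | ∃ n ≥ k, y = x n}) := by
      rw [mem_closure_iff_clusterPt]
      refine hζ.mono (le_principal_iff.mpr (mem_map.mpr ?_))
      filter_upwards [eventually_ge_atTop k] with n hn
      exact ⟨x n, ⟨n, hn, rfl⟩, rfl⟩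
    have h2 : closure (toWeakSpace ℝ X '' {y : X | ∃ n ≥ k, y = x n}) ⊆
        closure (toWeakSpace ℝ X '' (convexHull ℝ {y : X | ∃ n ≥ k, y = x n})) :=
      closure_mono (Set.image_mono (subset_convexHull ℝ _))
    have h3 := (convex_convexHull ℝ {y : X | ∃ n ≥ k, y = x n}).toWeakSpace_closure (𝕜 := ℝ)
    have h4 : ζ ∈ toWeakSpace ℝ X '' closure (convexHull ℝ {y : X | ∃ n ≥ k, y = x n}) := by
      rw [h3]; exact h2 h1
    obtain ⟨y, hy, hyz⟩ := h4
    rw [← hyz]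
    simpa using hy
  · -- nonempty chains imply weak relative compactness
    intro hch
    obtain ⟨R, hR⟩ := hA.subset_closedBall 0
    have hball : IsCompact (WeakDual.toStrongDual ⁻¹' Metric.closedBall 0 R :
        Set (WeakDual ℝ (StrongDual ℝ X))) := WeakDual.isCompact_closedBall (𝕜 := ℝ) 0 R
    have hsub : wrcJw X '' A ⊆ WeakDual.toStrongDual ⁻¹' Metric.closedBall 0 R := by
      rintro - ⟨a, ha, rfl⟩
      simp only [Set.mem_preimage, Metric.mem_closedBall]
      have h1 := double_dual_bound ℝ X a
      have h2 := hR ha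
      replace h2 : @norm X _ a ≤ R := mem_closedBall_zero_iff.mp h2
      have h3 : dist (WeakDual.toStrongDual (wrcJw X a)) 0 = ‖inclusionInDoubleDual ℝ X a‖ := by
        exact dist_zero_right (E := StrongDual ℝ (StrongDual ℝ X)) (WeakDual.toStrongDual (wrcJw X a))
      rw [h3]
      linarith
    have hKcpt : IsCompact (closure (wrcJw X '' A)) :=
      hball.of_isClosed_subset isClosed_closure (closure_minimal hsub hball.isClosed)
    have hrange : closure (wrcJw X '' A) ⊆ Set.range (wrcJw X) := by
      intro z hz
      obtain ⟨ξ, hξ⟩ := wrc_key A hch hz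
      exact ⟨ξ, hξ.symm⟩
    have hind : IsInducing (wrcJw X) := wrc_isInducing
    have hCcpt : IsCompact (wrcJw X ⁻¹' closure (wrcJw X '' A)) :=
      (hind.isCompact_preimage_iff hrange).mpr hKcpt
    refine hCcpt.of_isClosed_subset isClosed_closure (closure_minimal ?_
      (isClosed_closure.preimage hind.continuous))
    rintro - ⟨a, ha, rfl⟩
    exact subset_closure ⟨a, ha, rfl⟩
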